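/- There exists a real constant ε₀ > 0 such that for every real ε with 0 < ε < ε₀, every simple graph G on a finite vertex set, every nontrivial cluster C of the agreement decomposition of G with parameter ε, and every vertex u ∈ C, it holds that |N(u) ∩ C| ≥ (1 − 3ε)·|N(u)|. -/

import Mathlib

open scoped symmDiff Classical

/-- Two vertices `u, v` are in `ε`-agreement in `G` if
`|N(u) △ N(v)| < ε·max(|N(u)|, |N(v)|)`. -/
def InAgreement {V : Type*} [Fintype V] [DecidableEq V]
    (G : SimpleGraph V) [DecidableRel G.Adj] (ε : ℝ) (u v : V) : Prop :=
  ((G.neighborFinset u ∆ G.neighborFinset v).card : ℝ) <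
    ε * (max (G.neighborFinset u).card (G.neighborFinset v).card : ℕ)

/-- A vertex is `ε`-heavy if it is in `ε`-agreement with more than a
`(1 − ε)`-fraction of its neighbors. -/
noncomputable def Heavy {V : Type*} [Fintype V] [DecidableEq V]
    (G : SimpleGraph V) [DecidableRel G.Adj] (ε : ℝ) (u : V) : Prop :=
  (1 - ε) * ((G.neighborFinset u).card : ℝ) <
    (((G.neighborFinset u).filter (fun v => InAgreement G ε u v)).card : ℝ)

/-- The graph `G̃` obtained from `G` by deleting every edge whose endpoints are
not in `ε`-agreement and then every remaining edge both of whose endpoints are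
`ε`-light. -/
noncomputable def tildeGraph {V : Type*} [Fintype V] [DecidableEq V]
    (G : SimpleGraph V) [DecidableRel G.Adj] (ε : ℝ) : SimpleGraph V where
  Adj u v := G.Adj u v ∧ InAgreement G ε u v ∧ (Heavy G ε u ∨ Heavy G ε v)
  symm := ⟨by
    intro u v ⟨h1, h2, h3⟩
    refine ⟨h1.symm, ?_, h3.symm⟩
    unfold InAgreement at h2 ⊢
    rwa [symmDiff_comm, max_comm]⟩
  loopless := ⟨fun u h => G.irrefl h.1⟩

/-- `C` is a cluster of the agreement decomposition of `G` with parameter `ε`: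
the vertex set of a connected component of `G̃`. -/
noncomputable def IsCluster {V : Type*} [Fintype V] [DecidableEq V]
    (G : SimpleGraph V) [DecidableRel G.Adj] (ε : ℝ) (C : Finset V) : Prop :=
  ∃ v : V, C = Finset.univ.filter (fun w => (tildeGraph G ε).Reachable v w)

/-- Property 1: for every nontrivial cluster `C` of the agreement decomposition
and every `u ∈ C`, `|N(u) ∩ C| ≥ (1 − 3ε)·|N(u)|`. -/
private lemma key_arith {ε a b m d s asx bsx abx adx x : ℝ}
    (hε : 0 < ε) (hε3 : ε < 1/3)
    (hd : d < ε * m)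
    (hs : (1 - ε) * b < s)
    (hcard : asx ≤ x)
    (h1 : abx + adx = a)
    (h2 : abx ≤ asx + bsx)
    (h3 : adx ≤ d)
    (h6 : bsx + s = b)
    (ha0 : 0 ≤ a) (hbs0 : 0 ≤ bsx)
    (hma : a ≤ m) (hmb : b ≤ m) (hm0 : 0 ≤ m)
    (hma' : (1 - ε) * m < a) :
    (1 - 3*ε) * a ≤ x := by
  have k6 : 2*m < 3*a := by nlinarith [mul_nonneg hm0 (by linarith : (0:ℝ) ≤ 1 - 3*ε)]
  have k7 : ε*(2*m) < ε*(3*a) := mul_lt_mul_of_pos_left k6 hε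
  have k4 : ε*b ≤ ε*m := mul_le_mul_of_nonneg_left hmb hε.le
  -- bsx = b - s < ε*b ≤ ε*m ; adx ≤ d < ε*m ; x ≥ asx ≥ abx - bsx ≥ a - adx - bsx
  nlinarith

theorem cluster_nbr_inter_cluster_ge_of_nbr :
    ∃ ε₀ : ℝ, 0 < ε₀ ∧
      ∀ (V : Type) (_ : Fintype V) (_ : DecidableEq V)
        (G : SimpleGraph V) (_ : DecidableRel G.Adj) (ε : ℝ), 0 < ε → ε < ε₀ →
        ∀ C : Finset V, IsCluster G ε C → 1 < C.card →
          ∀ u ∈ C, (1 - 3 * ε) * ((G.neighborFinset u).card : ℝ) ≤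
            ((G.neighborFinset u ∩ C).card : ℝ) := by
  refine ⟨1/3, by norm_num, ?_⟩
  intro V _ _ G _ ε hε hε3 C hC hC1 u huC
  obtain ⟨r, rfl⟩ := hC
  set C := Finset.univ.filter (fun w => (tildeGraph G ε).Reachable r w) with hCdef
  have memC : ∀ w : V, w ∈ C ↔ (tildeGraph G ε).Reachable r w := by
    intro w; simp [hCdef]
  have hru : (tildeGraph G ε).Reachable r u := (memC u).mp huC
  -- u has a tilde-neighbor
  obtain ⟨v, hadj⟩ : ∃ v, (tildeGraph G ε).Adj u v := by
    obtain ⟨w, hw, hwu⟩ := Finset.exists_mem_ne hC1 u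
    have hrw : (tildeGraph G ε).Reachable r w := (memC w).mp hw
    obtain ⟨p⟩ := hru.symm.trans hrw
    cases p with
    | nil => exact absurd rfl hwu
    | cons h _ => exact ⟨_, h⟩
  set A := G.neighborFinset u with hA
  have hAC : ∀ S : Finset V, S ⊆ A → S ⊆ C →
      (1 - 3*ε) * (A.card : ℝ) ≤ ((A ∩ C).card : ℝ) →
        (1 - 3*ε) * (A.card : ℝ) ≤ ((A ∩ C).card : ℝ) := fun _ _ _ h => h
  rcases hadj.2.2 with hu | hv
  · -- u is heavy
    set S := A.filter (fun w => InAgreement G ε u w) with hS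
    have hsub : S ⊆ A ∩ C := by
      intro w hw
      rw [Finset.mem_filter] at hw
      have hadjw : (tildeGraph G ε).Adj u w :=
        ⟨(G.mem_neighborFinset u w).mp hw.1, hw.2, Or.inl hu⟩
      exact Finset.mem_inter.mpr ⟨hw.1, (memC w).mpr (hru.trans hadjw.reachable)⟩
    have hcard : (S.card : ℝ) ≤ ((A ∩ C).card : ℝ) := by
      exact_mod_cast Finset.card_le_card hsub
    have hheavy : (1 - ε) * (A.card : ℝ) < (S.card : ℝ) := hu
    have ha : (0:ℝ) ≤ (A.card : ℝ) := Nat.cast_nonneg _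
    nlinarith
  · -- v is heavy
    have hagree : InAgreement G ε u v := hadj.2.1
    set B := G.neighborFinset v with hB
    set S := B.filter (fun w => InAgreement G ε v w) with hS
    have hrv : (tildeGraph G ε).Reachable r v := hru.trans hadj.reachable
    have hsubC : S ⊆ C := by
      intro w hw
      rw [Finset.mem_filter] at hw
      have hadjw : (tildeGraph G ε).Adj v w :=
        ⟨(G.mem_neighborFinset v w).mp hw.1, hw.2, Or.inl hv⟩
      exact (memC w).mpr (hrv.trans hadjw.reachable)
    have hsub : A ∩ S ⊆ A ∩ C := Finset.inter_subset_inter Finset.Subset.rfl hsubC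
    -- counting
    have h1 : (A ∩ B).card + (A \ B).card = A.card := Finset.card_inter_add_card_sdiff A B
    have h2 : (A ∩ B).card ≤ (A ∩ S).card + (B \ S).card := by
      have : A ∩ B ⊆ (A ∩ S) ∪ (B \ S) := by
        intro w hw
        rw [Finset.mem_inter] at hw
        by_cases hws : w ∈ S
        · exact Finset.mem_union_left _ (Finset.mem_inter.mpr ⟨hw.1, hws⟩)
        · exact Finset.mem_union_right _ (Finset.mem_sdiff.mpr ⟨hw.2, hws⟩)
      exact le_trans (Finset.card_le_card this) (Finset.card_union_le _ _)
    have h3 : (A \ B).card ≤ (A ∆ B).card :=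
      Finset.card_le_card (by intro w hw; simp [Finset.mem_symmDiff, Finset.mem_sdiff.mp hw])
    have h4 : (B \ A).card ≤ (A ∆ B).card :=
      Finset.card_le_card (by intro w hw; simp [Finset.mem_symmDiff, Finset.mem_sdiff.mp hw])
    have h5 : B.card ≤ A.card + (B \ A).card := by
      have : B ⊆ A ∪ (B \ A) := by
        intro w hw
        by_cases hwa : w ∈ A
        · exact Finset.mem_union_left _ hwa
        · exact Finset.mem_union_right _ (Finset.mem_sdiff.mpr ⟨hw, hwa⟩)
      exact le_trans (Finset.card_le_card this) (Finset.card_union_le _ _)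
    have h6 : (B \ S).card + S.card = B.card :=
      Finset.card_sdiff_add_card_eq_card (Finset.filter_subset _ _)
    -- real versions
    have hd : ((A ∆ B).card : ℝ) < ε * max (A.card : ℝ) (B.card : ℝ) := by
      have h := hagree
      unfold InAgreement at h
      rw [Nat.cast_max] at h
      exact_mod_cast h
    set m := max (A.card : ℝ) (B.card : ℝ) with hmdef
    have hs : (1 - ε) * (B.card : ℝ) < (S.card : ℝ) := hv
    have hcard : ((A ∩ S).card : ℝ) ≤ ((A ∩ C).card : ℝ) := by
      exact_mod_cast Finset.card_le_card hsub
    have h1' : ((A ∩ B).card : ℝ) + ((A \ B).card : ℝ) = (A.card : ℝ) := by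
      exact_mod_cast h1
    have h2' : ((A ∩ B).card : ℝ) ≤ ((A ∩ S).card : ℝ) + ((B \ S).card : ℝ) := by
      exact_mod_cast h2
    have h3' : ((A \ B).card : ℝ) ≤ ((A ∆ B).card : ℝ) := by exact_mod_cast h3
    have h4' : ((B \ A).card : ℝ) ≤ ((A ∆ B).card : ℝ) := by exact_mod_cast h4
    have h5' : (B.card : ℝ) ≤ (A.card : ℝ) + ((B \ A).card : ℝ) := by exact_mod_cast h5
    have h6' : ((B \ S).card : ℝ) + (S.card : ℝ) = (B.card : ℝ) := by exact_mod_cast h6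
    have ha0 : (0:ℝ) ≤ (A.card : ℝ) := Nat.cast_nonneg _
    have hb0 : (0:ℝ) ≤ (B.card : ℝ) := Nat.cast_nonneg _
    have hd0 : (0:ℝ) ≤ ((A ∆ B).card : ℝ) := Nat.cast_nonneg _
    have has0 : (0:ℝ) ≤ ((A ∩ S).card : ℝ) := Nat.cast_nonneg _
    have hbs0 : (0:ℝ) ≤ ((B \ S).card : ℝ) := Nat.cast_nonneg _
    have hma : (A.card : ℝ) ≤ m := le_max_left _ _
    have hmb : (B.card : ℝ) ≤ m := le_max_right _ _
    have hm0 : (0:ℝ) ≤ m := le_trans ha0 hma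
    have hmle : m ≤ (A.card : ℝ) + ((A ∆ B).card : ℝ) := by
      rcases max_cases ((A.card : ℝ)) ((B.card : ℝ)) with ⟨he, _⟩ | ⟨he, _⟩ <;>
        rw [hmdef, he]
      · nlinarith
      · linarith
    have hma' : (1 - ε) * m < (A.card : ℝ) ∨ m = 0 := by
      rcases eq_or_lt_of_le hm0 with h | h
      · exact Or.inr h.symm
      · left; linarith
    rcases hma' with hma' | hma'
    · exact key_arith hε hε3 hd hs hcard h1' h2' h3' h6' ha0 hbs0 hma hmb hm0 hma' 
    · have hA0 : (A.card : ℝ) = 0 := le_antisymm (hma' ▸ hma) ha0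
      rw [hA0]
      simp [Nat.cast_nonneg]
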